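/- Define the IBP building block 𝓘(I|II) = Σ_{q} Σ_{ρ∈(𝔖_q|I)} ∏_{(ij)∈ρ} W_{ij} ∏_{k∈complement of ρ in I⊔II} V_k. Then for two splits related by moving one element i_{k+1} from II′ to I′ (so I″ = I′ ∪ {i_{k+1}}, II″ = II′ \ {i_{k+1}}), one has the algebraic identity 𝓘(I′|II′) - 𝓘(I″|II″) = V_{i_{k+1}} 𝓘(I′|II″) - Σ_{i_ℓ∈II″} W_{i_{k+1} i_ℓ} 𝓘(I′|II″ \ {i_ℓ}). -/
import Mathlib

open scoped Classical

set_option linter.unusedSectionVars false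
set_option linter.unusedVariables false
set_option linter.unreachableTactic false
set_option linter.unusedTactic false
set_option linter.unnecessarySeqFocus false
set_option maxHeartbeats 1000000

variable {ι : Type*} [Fintype ι] [LinearOrder ι]

/-- The support of a set of ordered pairs: all indices occurring in some pair. -/
def psupp (ρ : Finset (ι × ι)) : Finset ι :=
  ρ.image Prod.fst ∪ ρ.image Prod.snd

/-- `ρ` is a partition of its support into disjoint unordered pairs, each pair
being represented by the ordered pair `(a, b)` with `a < b`. -/
def IsPairing (ρ : Finset (ι × ι)) : Prop :=
  (∀ q ∈ ρ, q.1 < q.2) ∧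
  ∀ q ∈ ρ, ∀ q' ∈ ρ, q ≠ q' →
    q.1 ≠ q'.1 ∧ q.1 ≠ q'.2 ∧ q.2 ≠ q'.1 ∧ q.2 ≠ q'.2

/-- The IBP building block
`𝓘(I|II) = Σ_q Σ_{ρ∈(𝔖_q|I)} Π_{(ij)∈ρ} W_{ij} Π_{k∈(I⊔II)∖ρ} V_k`,
where `(𝔖_q|I)` consists of the pair partitions `ρ` of elements of `I ⊔ II`
with `I ⊆ supp ρ` and each pair of `ρ` having nonempty intersection with `I`. -/
noncomputable def IBPBlock {R : Type*} [CommRing R] (V : ι → R) (W : ι → ι → R)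
    (I II : Finset ι) : R :=
  ∑ ρ : Finset (ι × ι),
    if IsPairing ρ ∧ psupp ρ ⊆ I ∪ II ∧ I ⊆ psupp ρ ∧
        (∀ q ∈ ρ, q.1 ∈ I ∨ q.2 ∈ I) then
      (∏ q ∈ ρ, W q.1 q.2) * ∏ k ∈ (I ∪ II) \ psupp ρ, V k
    else 0

/-! ### Auxiliary lemmas -/

lemma mem_psupp {ρ : Finset (ι × ι)} {a : ι} :
    a ∈ psupp ρ ↔ ∃ q ∈ ρ, q.1 = a ∨ q.2 = a := by
  simp only [psupp, Finset.mem_union, Finset.mem_image]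
  constructor
  · rintro (⟨q, hq, rfl⟩ | ⟨q, hq, rfl⟩)
    · exact ⟨q, hq, Or.inl rfl⟩
    · exact ⟨q, hq, Or.inr rfl⟩
  · rintro ⟨q, hq, rfl | rfl⟩
    · exact Or.inl ⟨q, hq, rfl⟩
    · exact Or.inr ⟨q, hq, rfl⟩

lemma pair_eq_of_share {ρ : Finset (ι × ι)} (h : IsPairing ρ) {q q' : ι × ι}
    (hq : q ∈ ρ) (hq' : q' ∈ ρ)
    (hs : q.1 = q'.1 ∨ q.1 = q'.2 ∨ q.2 = q'.1 ∨ q.2 = q'.2) : q = q' := by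
  by_contra hne
  obtain ⟨h1, h2, h3, h4⟩ := h.2 q hq q' hq' hne
  tauto

lemma isPairing_subset {ρ ρ' : Finset (ι × ι)} (h : IsPairing ρ) (hs : ρ' ⊆ ρ) :
    IsPairing ρ' :=
  ⟨fun q hq => h.1 q (hs hq), fun q hq q' hq' hne => h.2 q (hs hq) q' (hs hq') hne⟩

lemma psupp_mono {ρ ρ' : Finset (ι × ι)} (hs : ρ' ⊆ ρ) : psupp ρ' ⊆ psupp ρ := by
  intro a ha
  rw [mem_psupp] at ha ⊢
  obtain ⟨q, hq, hqa⟩ := ha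
  exact ⟨q, hs hq, hqa⟩

lemma mem_psupp_insert {ρ : Finset (ι × ι)} {q : ι × ι} {a : ι} :
    a ∈ psupp (insert q ρ) ↔ a = q.1 ∨ a = q.2 ∨ a ∈ psupp ρ := by
  simp only [mem_psupp, Finset.mem_insert]
  constructor
  · rintro ⟨q', rfl | hq', h⟩
    · tauto
    · exact Or.inr (Or.inr ⟨q', hq', h⟩)
  · rintro (rfl | rfl | ⟨q', hq', h⟩)
    · exact ⟨q, Or.inl rfl, Or.inl rfl⟩
    · exact ⟨q, Or.inl rfl, Or.inr rfl⟩
    · exact ⟨q', Or.inr hq', h⟩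

lemma mem_psupp_erase {ρ : Finset (ι × ι)} (h : IsPairing ρ) {q₀ : ι × ι}
    (hq₀ : q₀ ∈ ρ) {a : ι} :
    a ∈ psupp (ρ.erase q₀) ↔ a ∈ psupp ρ ∧ a ≠ q₀.1 ∧ a ≠ q₀.2 := by
  simp only [mem_psupp, Finset.mem_erase]
  constructor
  · rintro ⟨q, ⟨hne, hq⟩, hqa⟩
    refine ⟨⟨q, hq, hqa⟩, ?_, ?_⟩
    · rintro rfl
      exact hne (pair_eq_of_share h hq hq₀ (by tauto))
    · rintro rfl
      exact hne (pair_eq_of_share h hq hq₀ (by tauto))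
  · rintro ⟨⟨q, hq, hqa⟩, h1, h2⟩
    refine ⟨q, ⟨?_, hq⟩, hqa⟩
    rintro rfl
    tauto

lemma isPairing_insert {ρ : Finset (ι × ι)} (h : IsPairing ρ) {a b : ι} (hab : a < b)
    (ha : a ∉ psupp ρ) (hb : b ∉ psupp ρ) : IsPairing (insert (a, b) ρ) := by
  have key : ∀ q ∈ ρ, q.1 ≠ a ∧ q.1 ≠ b ∧ q.2 ≠ a ∧ q.2 ≠ b := by
    intro q hq
    refine ⟨?_, ?_, ?_, ?_⟩ <;> rintro rfl
    · exact ha (mem_psupp.mpr ⟨q, hq, Or.inl rfl⟩)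
    · exact hb (mem_psupp.mpr ⟨q, hq, Or.inl rfl⟩)
    · exact ha (mem_psupp.mpr ⟨q, hq, Or.inr rfl⟩)
    · exact hb (mem_psupp.mpr ⟨q, hq, Or.inr rfl⟩)
  constructor
  · intro q hq
    rcases Finset.mem_insert.mp hq with rfl | hq
    · exact hab
    · exact h.1 q hq
  · intro q hq q' hq' hne
    rcases Finset.mem_insert.mp hq with rfl | hq <;>
      rcases Finset.mem_insert.mp hq' with h' | hq'
    · exact absurd h'.symm hne
    · have := key q' hq'
      refine ⟨?_, ?_, ?_, ?_⟩ <;> simp <;> tauto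
    · subst h'
      have := key q hq
      refine ⟨?_, ?_, ?_, ?_⟩ <;> simp <;> tauto
    · exact h.2 q hq q' hq' hne

lemma partner_unique {ρ : Finset (ι × ι)} (hp : IsPairing ρ) {x y y' : ι}
    (h1 : (x, y) ∈ ρ ∨ (y, x) ∈ ρ) (h2 : (x, y') ∈ ρ ∨ (y', x) ∈ ρ) : y = y' := by
  rcases h1 with h1 | h1 <;> rcases h2 with h2 | h2 <;>
    have := pair_eq_of_share hp h1 h2 (by simp) <;>
    simp only [Prod.mk.injEq] at this
  · exact this.2
  · exact this.2.trans this.1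
  · exact this.1.trans this.2
  · exact this.1

lemma unionInsertErase {I II : Finset ι} {x : ι} (hxI : x ∉ I) (hx : x ∈ II) :
    insert x I ∪ II.erase x = I ∪ II := by
  ext a
  simp only [Finset.mem_union, Finset.mem_insert, Finset.mem_erase]
  by_cases hax : a = x
  · subst hax; tauto
  · tauto

/-- The defining condition of the summands in `IBPBlock`. -/
def Cond (I II : Finset ι) (ρ : Finset (ι × ι)) : Prop :=
  IsPairing ρ ∧ psupp ρ ⊆ I ∪ II ∧ I ⊆ psupp ρ ∧ (∀ q ∈ ρ, q.1 ∈ I ∨ q.2 ∈ I)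

lemma condA {I II : Finset ι} {ρ : Finset (ι × ι)} {x : ι} (hxI : x ∉ I) (hx : x ∈ II)
    (hC : Cond I II ρ) (hxs : x ∈ psupp ρ) : Cond (insert x I) (II.erase x) ρ := by
  obtain ⟨hp, hsub, hIs, hm⟩ := hC
  have hU : insert x I ∪ II.erase x = I ∪ II := unionInsertErase hxI hx
  refine ⟨hp, by rw [hU]; exact hsub, ?_, fun q hq => ?_⟩
  · intro a ha
    rcases Finset.mem_insert.mp ha with rfl | ha
    · exact hxs
    · exact hIs ha
  · rcases hm q hq with h | h
    · exact Or.inl (Finset.mem_insert_of_mem h)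
    · exact Or.inr (Finset.mem_insert_of_mem h)

lemma condB {I II : Finset ι} {ρ : Finset (ι × ι)} {x : ι} (hxI : x ∉ I) (hx : x ∈ II)
    (hdisj : Disjoint I II) (hC' : Cond (insert x I) (II.erase x) ρ)
    (hnC : ¬ Cond I II ρ) : ∃ y ∈ II.erase x, (x, y) ∈ ρ ∨ (y, x) ∈ ρ := by
  obtain ⟨hp, hsub, hIs, hm⟩ := hC'
  have hU : insert x I ∪ II.erase x = I ∪ II := unionInsertErase hxI hx
  rw [hU] at hsub
  have hIsupp : I ⊆ psupp ρ := fun a ha => hIs (Finset.mem_insert_of_mem ha)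
  have hbad : ∃ q ∈ ρ, q.1 ∉ I ∧ q.2 ∉ I := by
    by_contra hb
    push_neg at hb
    exact hnC ⟨hp, hsub, hIsupp, fun q hq => by
      by_cases h1 : q.1 ∈ I
      · exact Or.inl h1
      · exact Or.inr (hb q hq h1)⟩
  obtain ⟨q, hq, hq1, hq2⟩ := hbad
  have hmx := hm q hq
  have hne : q.1 ≠ q.2 := ne_of_lt (hp.1 q hq)
  rcases hmx with h1 | h2
  · rcases Finset.mem_insert.mp h1 with rfl | h1
    · refine ⟨q.2, ?_, Or.inl (by simpa using hq)⟩
      have : q.2 ∈ psupp ρ := mem_psupp.mpr ⟨q, hq, Or.inr rfl⟩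
      have h2' : q.2 ∈ I ∪ II := hsub this
      rw [Finset.mem_erase]
      exact ⟨hne.symm, (Finset.mem_union.mp h2').resolve_left hq2⟩
    · exact absurd h1 hq1
  · rcases Finset.mem_insert.mp h2 with h2x | h2
    · refine ⟨q.1, ?_, Or.inr (by rw [← h2x]; simpa using hq)⟩
      have : q.1 ∈ psupp ρ := mem_psupp.mpr ⟨q, hq, Or.inl rfl⟩
      have h1' : q.1 ∈ I ∪ II := hsub this
      rw [Finset.mem_erase, ← h2x] at *
      exact ⟨hne, (Finset.mem_union.mp h1').resolve_left hq1⟩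
    · exact absurd h2 hq2

lemma condC {I II : Finset ι} {ρ : Finset (ι × ι)} {x y : ι} (hxI : x ∉ I)
    (hdisj : Disjoint I II) (hy : y ∈ II.erase x)
    (hmem : (x, y) ∈ ρ ∨ (y, x) ∈ ρ) (hC : Cond I II ρ) : False := by
  have hyI : y ∉ I := Finset.disjoint_right.mp hdisj (Finset.mem_of_mem_erase hy)
  rcases hmem with h | h
  · rcases hC.2.2.2 _ h with h1 | h1 <;> simp_all
  · rcases hC.2.2.2 _ h with h1 | h1 <;> simp_all

lemma condD {I II : Finset ι} {ρ : Finset (ι × ι)} {x : ι} (hxI : x ∉ I) (hx : x ∈ II) :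
    Cond I (II.erase x) ρ ↔ Cond I II ρ ∧ x ∉ psupp ρ := by
  constructor
  · rintro ⟨hp, hsub, hIs, hm⟩
    have hxs : x ∉ psupp ρ := by
      intro hxs
      rcases Finset.mem_union.mp (hsub hxs) with h | h
      · exact hxI h
      · exact (Finset.mem_erase.mp h).1 rfl
    exact ⟨⟨hp, hsub.trans (Finset.union_subset_union_right (Finset.erase_subset x II)),
      hIs, hm⟩, hxs⟩
  · rintro ⟨⟨hp, hsub, hIs, hm⟩, hxs⟩
    refine ⟨hp, ?_, hIs, hm⟩
    intro a ha
    rcases Finset.mem_union.mp (hsub ha) with h | h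
    · exact Finset.mem_union_left _ h
    · refine Finset.mem_union_right _ (Finset.mem_erase.mpr ⟨?_, h⟩)
      rintro rfl
      exact hxs ha

lemma condF {I II : Finset ι} {ρ : Finset (ι × ι)} {x y : ι} {q₀ : ι × ι}
    (hxI : x ∉ I) (hx : x ∈ II) (hdisj : Disjoint I II) (hy : y ∈ II.erase x)
    (hxy : (q₀.1 = x ∧ q₀.2 = y) ∨ (q₀.1 = y ∧ q₀.2 = x))
    (hC' : Cond (insert x I) (II.erase x) ρ) (hq₀ : q₀ ∈ ρ) :
    Cond I ((II.erase x).erase y) (ρ.erase q₀) := by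
  obtain ⟨hp, hsub, hIs, hm⟩ := hC'
  have hyI : y ∉ I := Finset.disjoint_right.mp hdisj (Finset.mem_of_mem_erase hy)
  have hq1ne : ∀ a, a ≠ q₀.1 → a ≠ q₀.2 → a ≠ x ∧ a ≠ y := by
    rcases hxy with ⟨h1, h2⟩ | ⟨h1, h2⟩ <;> rw [h1, h2] <;> tauto
  refine ⟨isPairing_subset hp (Finset.erase_subset _ _), ?_, ?_, ?_⟩
  · intro a ha
    rw [mem_psupp_erase hp hq₀] at ha
    obtain ⟨has, ha1, ha2⟩ := ha
    obtain ⟨hax, hay⟩ := hq1ne a ha1 ha2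
    rcases Finset.mem_union.mp (hsub has) with h | h
    · rcases Finset.mem_insert.mp h with rfl | h
      · exact absurd rfl hax
      · exact Finset.mem_union_left _ h
    · exact Finset.mem_union_right _
        (Finset.mem_erase.mpr ⟨hay, h⟩)
  · intro a ha
    have hax : a ≠ x := fun h => hxI (h ▸ ha)
    have hay : a ≠ y := fun h => hyI (h ▸ ha)
    rw [mem_psupp_erase hp hq₀]
    refine ⟨hIs (Finset.mem_insert_of_mem ha), ?_, ?_⟩ <;>
      rcases hxy with ⟨h1, h2⟩ | ⟨h1, h2⟩ <;> (try rw [h1]) <;> (try rw [h2])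
    all_goals first | exact hax | exact hay
  · intro q hq
    have hqρ : q ∈ ρ := Finset.mem_of_mem_erase hq
    have hqne : q ≠ q₀ := (Finset.mem_erase.mp hq).1
    have hxq : q.1 ≠ x ∧ q.2 ≠ x := by
      constructor <;> intro h <;> refine hqne (pair_eq_of_share hp hqρ hq₀ ?_) <;>
        rcases hxy with ⟨h1, h2⟩ | ⟨h1, h2⟩ <;> rw [h1, h2] <;> tauto
    rcases hm q hqρ with h | h
    · rcases Finset.mem_insert.mp h with h' | h'
      · exact absurd h' hxq.1
      · exact Or.inl h'
    · rcases Finset.mem_insert.mp h with h' | h'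
      · exact absurd h' hxq.2
      · exact Or.inr h'

lemma condG {I II : Finset ι} {ρ'' : Finset (ι × ι)} {x y : ι} {q₀ : ι × ι}
    (hxI : x ∉ I) (hx : x ∈ II) (hdisj : Disjoint I II) (hy : y ∈ II.erase x)
    (hxy : (q₀.1 = x ∧ q₀.2 = y) ∨ (q₀.1 = y ∧ q₀.2 = x)) (hord : q₀.1 < q₀.2)
    (hC'' : Cond I ((II.erase x).erase y) ρ'') :
    Cond (insert x I) (II.erase x) (insert q₀ ρ'') ∧ q₀ ∉ ρ'' := by
  obtain ⟨hp, hsub, hIs, hm⟩ := hC''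
  have hyI : y ∉ I := Finset.disjoint_right.mp hdisj (Finset.mem_of_mem_erase hy)
  have hxs : x ∉ psupp ρ'' := by
    intro h
    rcases Finset.mem_union.mp (hsub h) with h | h
    · exact hxI h
    · exact (Finset.mem_erase.mp (Finset.mem_of_mem_erase h)).1 rfl
  have hys : y ∉ psupp ρ'' := by
    intro h
    rcases Finset.mem_union.mp (hsub h) with h | h
    · exact hyI h
    · exact (Finset.mem_erase.mp h).1 rfl
  have h1s : q₀.1 ∉ psupp ρ'' := by rcases hxy with ⟨h1, _⟩ | ⟨h1, _⟩ <;> rw [h1] <;> assumption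
  have h2s : q₀.2 ∉ psupp ρ'' := by rcases hxy with ⟨_, h2⟩ | ⟨_, h2⟩ <;> rw [h2] <;> assumption
  have hq₀mem : q₀ ∉ ρ'' := fun h => h1s (mem_psupp.mpr ⟨q₀, h, Or.inl rfl⟩)
  have hpins : IsPairing (insert q₀ ρ'') := by
    have := isPairing_insert hp hord h1s h2s
    simpa using this
  refine ⟨⟨hpins, ?_, ?_, ?_⟩, hq₀mem⟩
  · intro a ha
    rw [mem_psupp_insert] at ha
    have hmemxy : ∀ b, b = x ∨ b = y → b ∈ insert x I ∪ II.erase x := by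
      rintro b (rfl | rfl)
      · exact Finset.mem_union_left _ (Finset.mem_insert_self _ _)
      · exact Finset.mem_union_right _ hy
    rcases ha with h | h | h
    · refine hmemxy a ?_; rcases hxy with ⟨h1, _⟩ | ⟨h1, _⟩ <;> rw [h, h1] <;> tauto
    · refine hmemxy a ?_; rcases hxy with ⟨_, h2⟩ | ⟨_, h2⟩ <;> rw [h, h2] <;> tauto
    · rcases Finset.mem_union.mp (hsub h) with h' | h'
      · exact Finset.mem_union_left _ (Finset.mem_insert_of_mem h')
      · exact Finset.mem_union_right _ (Finset.mem_of_mem_erase h')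
  · intro a ha
    rcases Finset.mem_insert.mp ha with rfl | ha
    · rw [mem_psupp_insert]
      rcases hxy with ⟨h1, _⟩ | ⟨_, h2⟩
      · exact Or.inl h1.symm
      · exact Or.inr (Or.inl h2.symm)
    · exact psupp_mono (Finset.subset_insert _ _) (hIs ha)
  · intro q hq
    rcases Finset.mem_insert.mp hq with rfl | hq
    · rcases hxy with ⟨h1, _⟩ | ⟨_, h2⟩
      · exact Or.inl (h1 ▸ Finset.mem_insert_self _ _)
      · exact Or.inr (h2 ▸ Finset.mem_insert_self _ _)
    · rcases hm q hq with h | h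
      · exact Or.inl (Finset.mem_insert_of_mem h)
      · exact Or.inr (Finset.mem_insert_of_mem h)

lemma IBPBlock_eq {R : Type*} [CommRing R] (V : ι → R) (W : ι → ι → R) (I II : Finset ι) :
    IBPBlock V W I II = ∑ ρ : Finset (ι × ι),
      if Cond I II ρ then (∏ q ∈ ρ, W q.1 q.2) * ∏ k ∈ (I ∪ II) \ psupp ρ, V k else 0 := by
  unfold IBPBlock Cond
  refine Finset.sum_congr rfl fun ρ _ => ?_
  split_ifs with h1 h2 <;> first | rfl | (exfalso; tauto)

lemma keyB {R : Type*} [CommRing R] (V : ι → R) (W : ι → ι → R) {I II : Finset ι}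
    {x : ι} (hxI : x ∉ I) (hx : x ∈ II) :
    V x * IBPBlock V W I (II.erase x) = ∑ ρ : Finset (ι × ι),
      if Cond I II ρ ∧ x ∉ psupp ρ then
        (∏ q ∈ ρ, W q.1 q.2) * ∏ k ∈ (I ∪ II) \ psupp ρ, V k
      else 0 := by
  rw [IBPBlock_eq, Finset.mul_sum]
  refine Finset.sum_congr rfl fun ρ _ => ?_
  simp only [condD hxI hx]
  by_cases h : Cond I II ρ ∧ x ∉ psupp ρ
  · rw [if_pos h, if_pos h]
    have hset : (I ∪ II) \ psupp ρ = insert x ((I ∪ II.erase x) \ psupp ρ) := by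
      ext a
      simp only [Finset.mem_sdiff, Finset.mem_insert, Finset.mem_union, Finset.mem_erase]
      by_cases hax : a = x
      · subst hax; simp [hx, h.2]
      · simp only [hax, false_or]; tauto
    rw [hset, Finset.prod_insert (by simp [Finset.mem_sdiff, hxI])]
    ring
  · rw [if_neg h, if_neg h, mul_zero]

lemma keyF {R : Type*} [CommRing R] (V : ι → R) (W : ι → ι → R)
    (hW : ∀ i j, W i j = W j i) {I II : Finset ι} {x : ι}
    (hxI : x ∉ I) (hx : x ∈ II) (hdisj : Disjoint I II) {y : ι} (hy : y ∈ II.erase x) :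
    W x y * IBPBlock V W I ((II.erase x).erase y) = ∑ ρ : Finset (ι × ι),
      if Cond (insert x I) (II.erase x) ρ ∧ ((x, y) ∈ ρ ∨ (y, x) ∈ ρ) then
        (∏ q ∈ ρ, W q.1 q.2) * ∏ k ∈ (I ∪ II) \ psupp ρ, V k
      else 0 := by
  have hyx : y ≠ x := (Finset.mem_erase.mp hy).1
  have hyII : y ∈ II := Finset.mem_of_mem_erase hy
  have hyI : y ∉ I := Finset.disjoint_right.mp hdisj hyII
  set q₀ : ι × ι := if x < y then (x, y) else (y, x) with hq₀def
  have hq : (q₀ = (x, y) ∧ x < y) ∨ (q₀ = (y, x) ∧ y < x) := by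
    rcases lt_or_gt_of_ne hyx.symm with h | h
    · left; exact ⟨if_pos h, h⟩
    · right; exact ⟨if_neg (not_lt.mpr h.le), h⟩
  have hxy : (q₀.1 = x ∧ q₀.2 = y) ∨ (q₀.1 = y ∧ q₀.2 = x) := by
    rcases hq with ⟨h, _⟩ | ⟨h, _⟩ <;> rw [h] <;> simp
  have hord : q₀.1 < q₀.2 := by
    rcases hq with ⟨h, hlt⟩ | ⟨h, hlt⟩ <;> rw [h] <;> exact hlt
  have hWq : W q₀.1 q₀.2 = W x y := by
    rcases hq with ⟨h, _⟩ | ⟨h, _⟩ <;> rw [h]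
    exact hW y x
  have hpmiff : ∀ ρ : Finset (ι × ι), IsPairing ρ →
      (((x, y) ∈ ρ ∨ (y, x) ∈ ρ) ↔ q₀ ∈ ρ) := by
    intro ρ hp
    rcases hq with ⟨h, hlt⟩ | ⟨h, hlt⟩ <;> rw [h] <;> constructor
    · rintro (h1 | h1)
      · exact h1
      · exact absurd (hp.1 _ h1) (by simpa using hlt.le)
    · exact Or.inl
    · rintro (h1 | h1)
      · exact absurd (hp.1 _ h1) (by simpa using hlt.le)
      · exact h1
    · exact Or.inr
  have hrhs : ∀ ρ : Finset (ι × ι),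
      (if Cond (insert x I) (II.erase x) ρ ∧ ((x, y) ∈ ρ ∨ (y, x) ∈ ρ) then
        (∏ q ∈ ρ, W q.1 q.2) * ∏ k ∈ (I ∪ II) \ psupp ρ, V k else 0)
      = (if Cond (insert x I) (II.erase x) ρ ∧ q₀ ∈ ρ then
        (∏ q ∈ ρ, W q.1 q.2) * ∏ k ∈ (I ∪ II) \ psupp ρ, V k else 0) := by
    intro ρ
    by_cases hC : Cond (insert x I) (II.erase x) ρ
    · simp only [hC, true_and, hpmiff ρ hC.1]
    · simp only [hC, false_and, if_false]
  rw [Finset.sum_congr rfl fun ρ _ => hrhs ρ]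
  rw [IBPBlock_eq, Finset.mul_sum]
  simp only [mul_ite, mul_zero]
  rw [← Finset.sum_filter, ← Finset.sum_filter]
  refine Finset.sum_nbij' (fun ρ'' => insert q₀ ρ'') (fun ρ => ρ.erase q₀) ?_ ?_ ?_ ?_ ?_
  · intro ρ'' h
    rw [Finset.mem_filter] at h ⊢
    obtain ⟨hG, hnm⟩ := condG hxI hx hdisj hy hxy hord h.2
    exact ⟨Finset.mem_univ _, hG, Finset.mem_insert_self _ _⟩
  · intro ρ h
    rw [Finset.mem_filter] at h ⊢
    exact ⟨Finset.mem_univ _, condF hxI hx hdisj hy hxy h.2.1 h.2.2⟩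
  · intro ρ'' h
    rw [Finset.mem_filter] at h
    exact Finset.erase_insert (condG hxI hx hdisj hy hxy hord h.2).2
  · intro ρ h
    rw [Finset.mem_filter] at h
    exact Finset.insert_erase h.2.2
  · intro ρ'' h
    rw [Finset.mem_filter] at h
    have hnm : q₀ ∉ ρ'' := (condG hxI hx hdisj hy hxy hord h.2).2
    have hxs : x ∉ psupp ρ'' := by
      intro hs
      rcases Finset.mem_union.mp (h.2.2.1 hs) with h' | h'
      · exact hxI h'
      · exact (Finset.mem_erase.mp (Finset.mem_of_mem_erase h')).1 rfl
    have hys : y ∉ psupp ρ'' := by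
      intro hs
      rcases Finset.mem_union.mp (h.2.2.1 hs) with h' | h'
      · exact hyI h'
      · exact (Finset.mem_erase.mp h').1 rfl
    have hset2 : (I ∪ II) \ psupp (insert q₀ ρ'')
        = (I ∪ (II.erase x).erase y) \ psupp ρ'' := by
      ext a
      simp only [Finset.mem_sdiff, Finset.mem_union, Finset.mem_erase, mem_psupp_insert]
      have hq12 : (a = q₀.1 ∨ a = q₀.2) ↔ (a = x ∨ a = y) := by
        rcases hxy with ⟨h1, h2⟩ | ⟨h1, h2⟩ <;> rw [h1, h2] <;> tauto
      by_cases hax : a = x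
      · subst hax
        rcases hq12.mpr (Or.inl rfl) with h' | h' <;> simp [hxI, ← h']
      · by_cases hay : a = y
        · subst hay
          rcases hq12.mpr (Or.inr rfl) with h' | h' <;> simp [hyI, ← h']
        · constructor
          · rintro ⟨hin, hns⟩
            have has : a ∉ psupp ρ'' := fun hs => hns (Or.inr (Or.inr hs))
            refine ⟨?_, has⟩
            rcases hin with h' | h'
            · exact Or.inl h'
            · exact Or.inr ⟨hay, hax, h'⟩
          · rintro ⟨hin, hns⟩
            constructor
            · rcases hin with h' | h'
              · exact Or.inl h'
              · exact Or.inr h'.2.2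
            · intro hcon
              rcases hcon with h' | h'
              · exact (hq12.mp (Or.inl h')).elim hax hay
              · rcases h' with h' | h'
                · exact (hq12.mp (Or.inr h')).elim hax hay
                · exact hns h'
    rw [Finset.prod_insert hnm, hWq, hset2]
    ring

lemma keyA {R : Type*} [CommRing R] (V : ι → R) (W : ι → ι → R) {I II : Finset ι}
    {x : ι} (hxI : x ∉ I) (hx : x ∈ II) (hdisj : Disjoint I II) :
    IBPBlock V W I II - IBPBlock V W (insert x I) (II.erase x)
      = (∑ ρ : Finset (ι × ι), if Cond I II ρ ∧ x ∉ psupp ρ then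
          (∏ q ∈ ρ, W q.1 q.2) * ∏ k ∈ (I ∪ II) \ psupp ρ, V k else 0)
      - ∑ ρ : Finset (ι × ι),
          if Cond (insert x I) (II.erase x) ρ ∧
              (∃ y ∈ II.erase x, (x, y) ∈ ρ ∨ (y, x) ∈ ρ) then
            (∏ q ∈ ρ, W q.1 q.2) * ∏ k ∈ (I ∪ II) \ psupp ρ, V k else 0 := by
  have hU : insert x I ∪ II.erase x = I ∪ II := unionInsertErase hxI hx
  rw [IBPBlock_eq, IBPBlock_eq, ← Finset.sum_sub_distrib, ← Finset.sum_sub_distrib]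
  refine Finset.sum_congr rfl fun ρ _ => ?_
  simp only [hU]
  by_cases hC : Cond I II ρ <;> by_cases hC' : Cond (insert x I) (II.erase x) ρ
  · have hxs : x ∈ psupp ρ := hC'.2.2.1 (Finset.mem_insert_self _ _)
    have hE : ¬ ∃ y ∈ II.erase x, (x, y) ∈ ρ ∨ (y, x) ∈ ρ := by
      rintro ⟨y, hy, hm⟩
      exact condC hxI hdisj hy hm hC
    rw [if_pos hC, if_pos hC', if_neg (fun h => h.2 hxs), if_neg (fun h => hE h.2)]
    ring
  · have hxs : x ∉ psupp ρ := fun h => hC' (condA hxI hx hC h)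
    rw [if_pos hC, if_neg hC', if_pos ⟨hC, hxs⟩, if_neg (fun h => hC' h.1)]
  · have hE := condB hxI hx hdisj hC' hC
    rw [if_neg hC, if_pos hC', if_neg (fun h => hC h.1), if_pos ⟨hC', hE⟩]
  · rw [if_neg hC, if_neg hC', if_neg (fun h => hC h.1), if_neg (fun h => hC' h.1)]

lemma keyC {R : Type*} [CommRing R] (V : ι → R) (W : ι → ι → R)
    (hW : ∀ i j, W i j = W j i) {I II : Finset ι} {x : ι}
    (hxI : x ∉ I) (hx : x ∈ II) (hdisj : Disjoint I II) :
    ∑ y ∈ II.erase x, W x y * IBPBlock V W I ((II.erase x).erase y)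
      = ∑ ρ : Finset (ι × ι),
          if Cond (insert x I) (II.erase x) ρ ∧
              (∃ y ∈ II.erase x, (x, y) ∈ ρ ∨ (y, x) ∈ ρ) then
            (∏ q ∈ ρ, W q.1 q.2) * ∏ k ∈ (I ∪ II) \ psupp ρ, V k else 0 := by
  rw [Finset.sum_congr rfl fun y hy => keyF V W hW hxI hx hdisj hy]
  rw [Finset.sum_comm]
  refine Finset.sum_congr rfl fun ρ _ => ?_
  by_cases hC : Cond (insert x I) (II.erase x) ρ
  · by_cases hE : ∃ y ∈ II.erase x, (x, y) ∈ ρ ∨ (y, x) ∈ ρ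
    · obtain ⟨y₀, hy₀, hpm⟩ := hE
      rw [Finset.sum_eq_single_of_mem y₀ hy₀ ?side, if_pos ⟨hC, hpm⟩,
        if_pos ⟨hC, ⟨y₀, hy₀, hpm⟩⟩]
      case side =>
        intro y hy hne
        rw [if_neg]
        rintro ⟨_, hpm'⟩
        exact hne (partner_unique hC.1 hpm' hpm)
    · rw [if_neg (fun h => hE h.2)]
      exact Finset.sum_eq_zero fun y hy => if_neg (fun h => hE ⟨y, hy, h.2⟩)
  · rw [if_neg (fun h => hC h.1)]
    exact Finset.sum_eq_zero fun y hy => if_neg (fun h => hC h.1)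

/-- Moving one element `x` from the second slot to the first changes the IBP
building block by `𝓘(I'|II') - 𝓘(I'∪{x}|II'∖{x}) = V_x 𝓘(I'|II'∖{x}) - Σ_{y∈II'∖{x}} W_{xy} 𝓘(I'|II'∖{x,y})`. -/
theorem IBPBlock_move {R : Type*} [CommRing R] (V : ι → R) (W : ι → ι → R)
    (hW : ∀ i j, W i j = W j i) (I II : Finset ι) (hdisj : Disjoint I II)
    (x : ι) (hx : x ∈ II) :
    IBPBlock V W I II - IBPBlock V W (insert x I) (II.erase x) =
      V x * IBPBlock V W I (II.erase x) -
        ∑ y ∈ II.erase x, W x y * IBPBlock V W I ((II.erase x).erase y) := by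
  have hxI : x ∉ I := Finset.disjoint_right.mp hdisj hx
  rw [keyA V W hxI hx hdisj, keyB V W hxI hx, keyC V W hW hxI hx hdisj]
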